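/- Let e₁ = (𝐢, -𝐢, -𝐢), e₂ = ((9/4)(𝐣-𝐤), (1/2)(𝐣+𝐤), 0), e₃ = ((9/4)(-𝐣+𝐤), 0, (1/2)(𝐣+𝐤)) in the Lie algebra 𝔰𝔩(2,ℝ)⊕𝔰𝔩(2,ℝ)⊕𝔰𝔩(2,ℝ) (with componentwise matrix commutator brackets). Then [e₁,e₂] = -2e₂, [e₁,e₃] = -2e₃, and [e₂,e₃] = 0, so the span of {e₁,e₂,e₃} is a 3-dimensional Lie subalgebra isomorphic to the Bianchi type V algebra. -/

import Mathlib

open Matrix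

abbrev M2 := Matrix (Fin 2) (Fin 2) ℝ

noncomputable def mi : M2 := !![1, 0; 0, -1]
noncomputable def mj : M2 := !![0, 1; 1, 0]
noncomputable def mk : M2 := !![0, 1; -1, 0]

/-- e₁ = (𝐢, -𝐢, -𝐢). -/
noncomputable def e₁ : M2 × M2 × M2 := (mi, -mi, -mi)
/-- e₂ = ((9/4)(𝐣-𝐤), (1/2)(𝐣+𝐤), 0). -/
noncomputable def e₂ : M2 × M2 × M2 := ((9/4 : ℝ) • (mj - mk), (1/2 : ℝ) • (mj + mk), 0)
/-- e₃ = ((9/4)(-𝐣+𝐤), 0, (1/2)(𝐣+𝐤)). -/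
noncomputable def e₃ : M2 × M2 × M2 := ((9/4 : ℝ) • (-mj + mk), 0, (1/2 : ℝ) • (mj + mk))

theorem stmt_14 :
    -- componentwise commutator brackets:
    e₁ * e₂ - e₂ * e₁ = (-2 : ℝ) • e₂ ∧
    e₁ * e₃ - e₃ * e₁ = (-2 : ℝ) • e₃ ∧
    e₂ * e₃ - e₃ * e₂ = 0 ∧
    -- {e₁,e₂,e₃} spans a 3-dimensional (Bianchi type V) Lie subalgebra:
    LinearIndependent ℝ ![e₁, e₂, e₃] := by
  refine ⟨?_, ?_, ?_, ?_⟩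
  · simp only [e₁, e₂, Prod.mk_mul_mk, Prod.mk_sub_mk, Prod.smul_mk, Prod.mk.injEq,
      mi, mj, mk]
    norm_num [Matrix.mul_fin_two]
    constructor <;> constructor <;> funext i <;> fin_cases i <;> simp
  · simp only [e₁, e₃, Prod.mk_mul_mk, Prod.mk_sub_mk, Prod.smul_mk, Prod.mk.injEq,
      mi, mj, mk]
    norm_num [Matrix.mul_fin_two]
    constructor <;> constructor <;> funext i <;> fin_cases i <;> simp
  · simp only [e₂, e₃, Prod.mk_mul_mk, Prod.mk_sub_mk, Prod.mk.injEq, mi, mj, mk]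
    norm_num [Matrix.mul_fin_two]
    ext i j <;> fin_cases i <;> fin_cases j <;> norm_num
  · rw [Fintype.linearIndependent_iff]
    intro g hg
    have h0 := congrArg (fun p => p.1 0 0) hg
    have h1 := congrArg (fun p => p.2.1 0 1) hg
    have h2 := congrArg (fun p => p.2.2 0 1) hg
    simp [Fin.sum_univ_three, e₁, e₂, e₃, mi, mj, mk] at h0 h1 h2
    intro i
    fin_cases i <;> simp <;> linarith
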